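/- Let n be a positive integer, m a divisor of n, a and b integers with 0 ≤ a,b < n/m, and c an integer with 0 ≤ c < m and gcd(c,m) = 1. Let V be the ℂ-vector space of functions f : ℤ/mℤ → ℂ. Define ρ_{a,b,c} : H(n) → GL(V) by (ρ_{a,b,c}(x,y,z)f)(j) = e^{2πi·m(ax̃+bỹ)/n}·e^{2πi·c(ȳj+z̄)/m}·f(j+x̄), where x̃,ỹ are integer representatives of x,y, and x̄,ȳ,z̄ denote reductions mod m (well-defined since m | n). Then ρ_{a,b,c} is a group homomorphism: ρ_{a,b,c}((x,y,z)(x',y',z')) = ρ_{a,b,c}(x,y,z)·ρ_{a,b,c}(x',y',z') for all (x,y,z),(x',y',z') ∈ H(n). -/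

import Mathlib

/-- The Heisenberg group mod `n`, as triples `(x, y, z)` of elements of `ℤ/nℤ`. -/
abbrev Heis (n : ℕ) := ZMod n × ZMod n × ZMod n

/-- Multiplication in the Heisenberg group:
`(x,y,z)(x',y',z') = (x+x', y+y', z+z'+x*y')`. -/
def heisMul {n : ℕ} (g h : Heis n) : Heis n :=
  (g.1 + h.1, g.2.1 + h.2.1, g.2.2 + h.2.2 + g.1 * h.2.1)

/-- The representation `ρ_{a,b,c}` of `H(n)` on functions `f : ℤ/mℤ → ℂ`:
`(ρ_{a,b,c}(x,y,z)f)(j) = e^{2πi·m(a·x̃+b·ỹ)/n}·e^{2πi·c(ȳ·j+z̄)/m}·f(j+x̄)`,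
where `x̃, ỹ` are integer representatives of `x, y`, and bars denote reduction
mod `m` (well defined since `m ∣ n`). -/
noncomputable def heisRep (n m : ℕ) (hm : m ∣ n) (a b c : ℕ) (g : Heis n)
    (f : ZMod m → ℂ) : ZMod m → ℂ := fun j =>
  Complex.exp (2 * (Real.pi : ℂ) * Complex.I *
      ((m : ℂ) * ((a : ℂ) * ((g.1.val : ℕ) : ℂ) + (b : ℂ) * ((g.2.1.val : ℕ) : ℂ))) /
      (n : ℂ)) *
    Complex.exp (2 * (Real.pi : ℂ) * Complex.I *
      ((c : ℂ) *
        (((ZMod.castHom hm (ZMod m) g.2.1 * j + ZMod.castHom hm (ZMod m) g.2.2).val : ℕ) : ℂ)) /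
      (m : ℂ)) *
    f (j + ZMod.castHom hm (ZMod m) g.1)

private lemma exp_congr (N : ℕ) (hN : N ≠ 0) (p q : ℤ) (h : (p : ZMod N) = (q : ZMod N)) :
    Complex.exp (2 * (Real.pi : ℂ) * Complex.I * (p : ℂ) / (N : ℂ)) =
    Complex.exp (2 * (Real.pi : ℂ) * Complex.I * (q : ℂ) / (N : ℂ)) := by
  obtain ⟨k, hk⟩ := (Int.modEq_iff_dvd.mp ((ZMod.intCast_eq_intCast_iff _ _ _).mp h))
  have hq : (q : ℂ) = (p : ℂ) + (N : ℂ) * (k : ℂ) := by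
    have : q = p + (N : ℤ) * k := by omega
    exact_mod_cast congrArg (fun t : ℤ => (t : ℂ)) this
  have hN' : (N : ℂ) ≠ 0 := Nat.cast_ne_zero.mpr hN
  rw [hq, show 2 * (Real.pi : ℂ) * Complex.I * ((p : ℂ) + (N : ℂ) * (k : ℂ)) / (N : ℂ) =
      2 * (Real.pi : ℂ) * Complex.I * (p : ℂ) / (N : ℂ) + (k : ℂ) * (2 * (Real.pi : ℂ) * Complex.I)
      from by field_simp,
    Complex.exp_add, Complex.exp_int_mul_two_pi_mul_I, mul_one]

/-- `ρ_{a,b,c}` is a group homomorphism: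
`ρ_{a,b,c}((x,y,z)(x',y',z')) = ρ_{a,b,c}(x,y,z) ∘ ρ_{a,b,c}(x',y',z')`. -/
theorem heisRep_hom (n m : ℕ) (hn : 0 < n) (hm : m ∣ n) (a b c : ℕ)
    (ha : a < n / m) (hb : b < n / m) (hc : c < m) (hcm : Nat.gcd c m = 1)
    (g g' : Heis n) (f : ZMod m → ℂ) :
    heisRep n m hm a b c (heisMul g g') f =
      heisRep n m hm a b c g (heisRep n m hm a b c g' f) := by
  obtain ⟨x, y, z⟩ := g
  obtain ⟨x', y', z'⟩ := g'
  haveI : NeZero n := ⟨hn.ne'⟩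
  have hm0 : m ≠ 0 := by rintro rfl; rw [zero_dvd_iff] at hm; omega
  haveI : NeZero m := ⟨hm0⟩
  funext j
  simp only [heisRep, heisMul]
  have hf : j + ZMod.castHom hm (ZMod m) (x + x') =
      j + ZMod.castHom hm (ZMod m) x + ZMod.castHom hm (ZMod m) x' := by
    rw [map_add]; ring
  rw [hf]
  have h1 : Complex.exp (2 * (Real.pi : ℂ) * Complex.I *
        ((m : ℂ) * ((a : ℂ) * (((x + x').val : ℕ) : ℂ) + (b : ℂ) * (((y + y').val : ℕ) : ℂ))) /
        (n : ℂ)) =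
      Complex.exp (2 * (Real.pi : ℂ) * Complex.I *
        ((m : ℂ) * ((a : ℂ) * ((x.val : ℕ) : ℂ) + (b : ℂ) * ((y.val : ℕ) : ℂ))) / (n : ℂ)) *
      Complex.exp (2 * (Real.pi : ℂ) * Complex.I *
        ((m : ℂ) * ((a : ℂ) * ((x'.val : ℕ) : ℂ) + (b : ℂ) * ((y'.val : ℕ) : ℂ))) / (n : ℂ)) := by
    rw [← Complex.exp_add]
    have e1 : 2 * (Real.pi : ℂ) * Complex.I *
        ((m : ℂ) * ((a : ℂ) * (((x + x').val : ℕ) : ℂ) + (b : ℂ) * (((y + y').val : ℕ) : ℂ))) /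
        (n : ℂ) =
        2 * (Real.pi : ℂ) * Complex.I *
        (((m * (a * (x + x').val + b * (y + y').val) : ℤ) : ℂ)) / (n : ℂ) := by
      push_cast; ring
    have e2 : 2 * (Real.pi : ℂ) * Complex.I *
        ((m : ℂ) * ((a : ℂ) * ((x.val : ℕ) : ℂ) + (b : ℂ) * ((y.val : ℕ) : ℂ))) / (n : ℂ) +
        2 * (Real.pi : ℂ) * Complex.I *
        ((m : ℂ) * ((a : ℂ) * ((x'.val : ℕ) : ℂ) + (b : ℂ) * ((y'.val : ℕ) : ℂ))) / (n : ℂ) =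
        2 * (Real.pi : ℂ) * Complex.I *
        (((m * (a * x.val + b * y.val) + m * (a * x'.val + b * y'.val) : ℤ) : ℂ)) / (n : ℂ) := by
      push_cast; ring
    rw [e1, e2]
    apply exp_congr n hn.ne'
    push_cast [ZMod.natCast_val, ZMod.cast_id]
    ring
  have h2 : Complex.exp (2 * (Real.pi : ℂ) * Complex.I *
        ((c : ℂ) *
          (((ZMod.castHom hm (ZMod m) (y + y') * j +
              ZMod.castHom hm (ZMod m) (z + z' + x * y')).val : ℕ) : ℂ)) / (m : ℂ)) =
      Complex.exp (2 * (Real.pi : ℂ) * Complex.I *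
        ((c : ℂ) *
          (((ZMod.castHom hm (ZMod m) y * j + ZMod.castHom hm (ZMod m) z).val : ℕ) : ℂ)) /
        (m : ℂ)) *
      Complex.exp (2 * (Real.pi : ℂ) * Complex.I *
        ((c : ℂ) *
          (((ZMod.castHom hm (ZMod m) y' * (j + ZMod.castHom hm (ZMod m) x) +
              ZMod.castHom hm (ZMod m) z').val : ℕ) : ℂ)) / (m : ℂ)) := by
    rw [← Complex.exp_add]
    have e1 : 2 * (Real.pi : ℂ) * Complex.I *
        ((c : ℂ) *
          (((ZMod.castHom hm (ZMod m) (y + y') * j +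
              ZMod.castHom hm (ZMod m) (z + z' + x * y')).val : ℕ) : ℂ)) / (m : ℂ) =
        2 * (Real.pi : ℂ) * Complex.I *
        (((c * (ZMod.castHom hm (ZMod m) (y + y') * j +
              ZMod.castHom hm (ZMod m) (z + z' + x * y')).val : ℤ) : ℂ)) / (m : ℂ) := by
      push_cast; ring
    have e2 : 2 * (Real.pi : ℂ) * Complex.I *
        ((c : ℂ) *
          (((ZMod.castHom hm (ZMod m) y * j + ZMod.castHom hm (ZMod m) z).val : ℕ) : ℂ)) /
        (m : ℂ) +
        2 * (Real.pi : ℂ) * Complex.I *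
        ((c : ℂ) *
          (((ZMod.castHom hm (ZMod m) y' * (j + ZMod.castHom hm (ZMod m) x) +
              ZMod.castHom hm (ZMod m) z').val : ℕ) : ℂ)) / (m : ℂ) =
        2 * (Real.pi : ℂ) * Complex.I *
        (((c * (ZMod.castHom hm (ZMod m) y * j + ZMod.castHom hm (ZMod m) z).val +
            c * (ZMod.castHom hm (ZMod m) y' * (j + ZMod.castHom hm (ZMod m) x) +
              ZMod.castHom hm (ZMod m) z').val : ℤ) : ℂ)) / (m : ℂ) := by
      push_cast; ring
    rw [e1, e2]
    apply exp_congr m hm0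
    push_cast [ZMod.natCast_val, ZMod.cast_id, map_add, map_mul]
    ring
  rw [h1, h2]
  ring
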